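/- (Concentration of the proper component at the phase transition.) Fix K > 0. Let (l_n) be positive reals with l_n → +∞ and ε_n = K·√(l_n)·exp(−l_n). Then for every c > 0, the normalized mass outside [−c, c] of the proper component vanishes: (∫_{|β| > c} (exp{l_n·ε_n²/(β² + ε_n²)} − 1) dβ) / (∫_ℝ (exp{l_n·ε_n²/(β² + ε_n²)} − 1) dβ) → 0 as n → ∞; consequently the normalized proper component converges narrowly to the Dirac measure at 0. -/

import Mathlib

open Filter MeasureTheory Real

lemma myIntegrable_inv_sq_add {e : ℝ} (he : 0 < e) :
    Integrable (fun β : ℝ => (β ^ 2 + e ^ 2)⁻¹) := by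
  have h := (integrable_inv_one_add_sq.comp_div (ne_of_gt he)).const_mul ((e : ℝ) ^ 2)⁻¹
  refine h.congr (Filter.Eventually.of_forall fun x => ?_)
  have : x ^ 2 + e ^ 2 ≠ 0 := by positivity
  field_simp; ring

lemma myIntegral_inv_sq_add {e : ℝ} (he : 0 < e) :
    ∫ β : ℝ, (β ^ 2 + e ^ 2)⁻¹ = Real.pi / e := by
  have key : (fun β : ℝ => (β ^ 2 + e ^ 2)⁻¹)
      = fun β : ℝ => (e ^ 2)⁻¹ * (1 + (β / e) ^ 2)⁻¹ := by
    funext x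
    have h1 : x ^ 2 + e ^ 2 ≠ 0 := by positivity
    field_simp
    ring
  rw [key, MeasureTheory.integral_const_mul]
  rw [MeasureTheory.Measure.integral_comp_div (fun x : ℝ => (1 + x ^ 2)⁻¹) e,
    integral_univ_inv_one_add_sq, smul_eq_mul, abs_of_pos he]
  field_simp

lemma exp_sub_one_le {x : ℝ} (hx : 0 ≤ x) : Real.exp x - 1 ≤ x * Real.exp x := by
  have h1 : -x + 1 ≤ (Real.exp x)⁻¹ := by
    rw [← Real.exp_neg]; exact Real.add_one_le_exp (-x)
  have h2 := mul_le_mul_of_nonneg_left h1 (Real.exp_pos x).le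
  rw [mul_inv_cancel₀ (Real.exp_pos x).ne'] at h2
  nlinarith

lemma my_ratio_bound {a e c : ℝ} (ha : 0 < a) (he : 0 < e) (hc : 0 < c) :
    (∫ β in {b : ℝ | c < |b|}, (Real.exp (a * (e ^ 2 / (β ^ 2 + e ^ 2))) - 1)) /
      (∫ β : ℝ, (Real.exp (a * (e ^ 2 / (β ^ 2 + e ^ 2))) - 1))
    ≤ Real.pi * a * Real.exp (a * e ^ 2 / c ^ 2) / (2 * (Real.exp (a / 2) - 1)) := by
  set g : ℝ → ℝ := fun β => Real.exp (a * (e ^ 2 / (β ^ 2 + e ^ 2))) - 1 with hg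
  have hpos : ∀ β : ℝ, (0:ℝ) < β ^ 2 + e ^ 2 := fun β => by positivity
  have hx_nonneg : ∀ β : ℝ, (0:ℝ) ≤ a * (e ^ 2 / (β ^ 2 + e ^ 2)) := fun β => by positivity
  have hg_nonneg : ∀ β, 0 ≤ g β := fun β =>
    sub_nonneg.mpr (Real.one_le_exp (hx_nonneg β))
  have hg_cont : Continuous g := by
    have h1 : Continuous fun β : ℝ => a * (e ^ 2 / (β ^ 2 + e ^ 2)) :=
      continuous_const.mul (continuous_const.div (by continuity) fun β => (hpos β).ne')
    exact (Real.continuous_exp.comp h1).sub continuous_const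
  have hx_le : ∀ β : ℝ, a * (e ^ 2 / (β ^ 2 + e ^ 2)) ≤ a := by
    intro β
    have : e ^ 2 / (β ^ 2 + e ^ 2) ≤ 1 := by
      rw [div_le_one (hpos β)]; nlinarith [sq_nonneg β]
    nlinarith
  have hdom : Integrable (fun β : ℝ => a * e ^ 2 * Real.exp a * (β ^ 2 + e ^ 2)⁻¹) :=
    (myIntegrable_inv_sq_add he).const_mul _
  have hg_int : Integrable g := by
    refine hdom.mono' hg_cont.aestronglyMeasurable (Filter.Eventually.of_forall fun β => ?_)
    rw [Real.norm_eq_abs, abs_of_nonneg (hg_nonneg β)]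
    have h1 := exp_sub_one_le (hx_nonneg β)
    have h2 : Real.exp (a * (e ^ 2 / (β ^ 2 + e ^ 2))) ≤ Real.exp a :=
      Real.exp_le_exp.mpr (hx_le β)
    have h3 : a * (e ^ 2 / (β ^ 2 + e ^ 2)) * Real.exp (a * (e ^ 2 / (β ^ 2 + e ^ 2)))
        ≤ a * (e ^ 2 / (β ^ 2 + e ^ 2)) * Real.exp a :=
      mul_le_mul_of_nonneg_left h2 (hx_nonneg β)
    have h4 : a * (e ^ 2 / (β ^ 2 + e ^ 2)) * Real.exp a
        = a * e ^ 2 * Real.exp a * (β ^ 2 + e ^ 2)⁻¹ := by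
      field_simp
    simp only [hg]
    linarith [h4 ▸ h3]
  have hS : MeasurableSet {b : ℝ | c < |b|} :=
    (isOpen_lt continuous_const continuous_abs).measurableSet
  set X : ℝ := Real.exp (a * e ^ 2 / c ^ 2) with hX
  have hXpos : 0 < X := Real.exp_pos _
  have hdom2 : Integrable (fun β : ℝ => a * e ^ 2 * X * (β ^ 2 + e ^ 2)⁻¹) :=
    (myIntegrable_inv_sq_add he).const_mul _
  -- numerator bound
  have hnum : (∫ β in {b : ℝ | c < |b|}, g β) ≤ Real.pi * a * e * X := by
    have step1 : (∫ β in {b : ℝ | c < |b|}, g β)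
        ≤ ∫ β in {b : ℝ | c < |b|}, a * e ^ 2 * X * (β ^ 2 + e ^ 2)⁻¹ := by
      refine setIntegral_mono_on hg_int.integrableOn hdom2.integrableOn hS fun β hβ => ?_
      have hβ' : c < |β| := hβ
      have hβ2 : c ^ 2 ≤ β ^ 2 + e ^ 2 := by
        nlinarith [sq_abs β, sq_nonneg e]
      have hxle : a * (e ^ 2 / (β ^ 2 + e ^ 2)) ≤ a * e ^ 2 / c ^ 2 := by
        rw [mul_div_assoc]
        gcongr
      have h1 := exp_sub_one_le (hx_nonneg β)
      have h2 : Real.exp (a * (e ^ 2 / (β ^ 2 + e ^ 2))) ≤ X :=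
        Real.exp_le_exp.mpr hxle
      have h3 : a * (e ^ 2 / (β ^ 2 + e ^ 2)) * Real.exp (a * (e ^ 2 / (β ^ 2 + e ^ 2)))
          ≤ a * (e ^ 2 / (β ^ 2 + e ^ 2)) * X :=
        mul_le_mul_of_nonneg_left h2 (hx_nonneg β)
      have h4 : a * (e ^ 2 / (β ^ 2 + e ^ 2)) * X
          = a * e ^ 2 * X * (β ^ 2 + e ^ 2)⁻¹ := by
        field_simp
      simp only [hg]
      linarith [h4 ▸ h3]
    have step2 : (∫ β in {b : ℝ | c < |b|}, a * e ^ 2 * X * (β ^ 2 + e ^ 2)⁻¹)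
        ≤ ∫ β : ℝ, a * e ^ 2 * X * (β ^ 2 + e ^ 2)⁻¹ :=
      setIntegral_le_integral hdom2 (Filter.Eventually.of_forall fun β => by positivity)
    have step3 : (∫ β : ℝ, a * e ^ 2 * X * (β ^ 2 + e ^ 2)⁻¹) = Real.pi * a * e * X := by
      rw [MeasureTheory.integral_const_mul, myIntegral_inv_sq_add he]
      field_simp
    linarith
  -- denominator lower bound
  have hd1 : 0 < Real.exp (a / 2) - 1 := by
    have := Real.add_one_le_exp (a / 2)
    linarith
  have hden : 2 * e * (Real.exp (a / 2) - 1) ≤ ∫ β : ℝ, g β := by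
    have hconst_int : IntegrableOn (fun _ : ℝ => Real.exp (a / 2) - 1) (Set.Icc (-e) e) :=
      integrableOn_const measure_Icc_lt_top.ne
    have step1 : (∫ _ in Set.Icc (-e) e, (Real.exp (a / 2) - 1))
        ≤ ∫ β in Set.Icc (-e) e, g β := by
      refine setIntegral_mono_on hconst_int hg_int.integrableOn measurableSet_Icc
        fun β hβ => ?_
      have hβ2 : β ^ 2 ≤ e ^ 2 := sq_le_sq' hβ.1 hβ.2
      have hhalf : a / 2 ≤ a * (e ^ 2 / (β ^ 2 + e ^ 2)) := by
        have hh : (1:ℝ)/2 ≤ e ^ 2 / (β ^ 2 + e ^ 2) := by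
          rw [le_div_iff₀ (hpos β)]; linarith
        calc a / 2 = a * (1/2) := by ring
          _ ≤ a * (e ^ 2 / (β ^ 2 + e ^ 2)) := mul_le_mul_of_nonneg_left hh ha.le
      simp only [hg]
      have := Real.exp_le_exp.mpr hhalf
      linarith
    have step2 : (∫ _ in Set.Icc (-e) e, (Real.exp (a / 2) - 1))
        = 2 * e * (Real.exp (a / 2) - 1) := by
      rw [setIntegral_const, Real.volume_real_Icc, smul_eq_mul,
        max_eq_left (by linarith)]
      ring
    have step3 : (∫ β in Set.Icc (-e) e, g β) ≤ ∫ β : ℝ, g β :=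
      setIntegral_le_integral hg_int (Filter.Eventually.of_forall hg_nonneg)
    linarith
  -- conclude
  have hfinal := div_le_div₀ (by positivity : (0:ℝ) ≤ Real.pi * a * e * X)
    hnum (by positivity : (0:ℝ) < 2 * e * (Real.exp (a / 2) - 1)) hden
  calc (∫ β in {b : ℝ | c < |b|}, g β) / ∫ β : ℝ, g β
      ≤ Real.pi * a * e * X / (2 * e * (Real.exp (a / 2) - 1)) := hfinal
    _ = Real.pi * a * X / (2 * (Real.exp (a / 2) - 1)) := by
        field_simp

/-- **Concentration of the proper component at the phase transition.** With
`l_n → ∞` and `ε_n = K √(l_n) exp(−l_n)`, for every `c > 0` the normalized mass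
of the proper component outside `[−c, c]` vanishes. -/
theorem sic_proper_component_concentration_phase_transition (K : ℝ) (hK : 0 < K)
    (l : ℕ → ℝ) (hl_pos : ∀ n, 0 < l n) (hl : Tendsto l atTop atTop)
    (ε : ℕ → ℝ) (hε : ε = fun n => K * Real.sqrt (l n) * Real.exp (-l n))
    (c : ℝ) (hc : 0 < c) :
    Tendsto (fun n =>
        (∫ β in {b : ℝ | c < |b|},
            (Real.exp (l n * ((ε n) ^ 2 / (β ^ 2 + (ε n) ^ 2))) - 1)) /
          ∫ β : ℝ, (Real.exp (l n * ((ε n) ^ 2 / (β ^ 2 + (ε n) ^ 2))) - 1))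
      atTop (nhds 0) := by
  have hε_pos : ∀ n, 0 < ε n := by
    intro n
    rw [hε]
    have := hl_pos n
    positivity
  have hS : MeasurableSet {b : ℝ | c < |b|} :=
    (isOpen_lt continuous_const continuous_abs).measurableSet
  -- nonnegativity of the ratio
  have hnonneg : ∀ n, 0 ≤
      (∫ β in {b : ℝ | c < |b|},
          (Real.exp (l n * ((ε n) ^ 2 / (β ^ 2 + (ε n) ^ 2))) - 1)) /
        ∫ β : ℝ, (Real.exp (l n * ((ε n) ^ 2 / (β ^ 2 + (ε n) ^ 2))) - 1) := by
    intro n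
    have hptnn : ∀ β : ℝ, 0 ≤ Real.exp (l n * ((ε n) ^ 2 / (β ^ 2 + (ε n) ^ 2))) - 1 := by
      intro β
      have h1 : (0:ℝ) ≤ l n * ((ε n) ^ 2 / (β ^ 2 + (ε n) ^ 2)) := by
        have := hl_pos n; have := hε_pos n; positivity
      exact sub_nonneg.mpr (Real.one_le_exp h1)
    exact div_nonneg (setIntegral_nonneg hS fun β _ => hptnn β)
      (integral_nonneg fun β => hptnn β)
  -- the upper bound from the key lemma
  have hbound : ∀ n,
      (∫ β in {b : ℝ | c < |b|},
          (Real.exp (l n * ((ε n) ^ 2 / (β ^ 2 + (ε n) ^ 2))) - 1)) /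
        (∫ β : ℝ, (Real.exp (l n * ((ε n) ^ 2 / (β ^ 2 + (ε n) ^ 2))) - 1))
      ≤ Real.pi * l n * Real.exp (l n * (ε n) ^ 2 / c ^ 2)
          / (2 * (Real.exp (l n / 2) - 1)) :=
    fun n => my_ratio_bound (hl_pos n) (hε_pos n) hc
  -- x n → 0
  have hx0 : Tendsto (fun n => l n * (ε n) ^ 2 / c ^ 2) atTop (nhds 0) := by
    have h4 : Tendsto (fun t : ℝ => t ^ 2 * Real.exp (-t)) atTop (nhds 0) :=
      tendsto_pow_mul_exp_neg_atTop_nhds_zero 2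
    have h5 : Tendsto (fun n => 2 * l n) atTop atTop :=
      hl.const_mul_atTop two_pos
    have h6 := (h4.comp h5).const_mul (K ^ 2 / (4 * c ^ 2))
    rw [mul_zero] at h6
    refine h6.congr fun n => ?_
    simp only [Function.comp, hε]
    have hsq : Real.sqrt (l n) ^ 2 = l n := Real.sq_sqrt (hl_pos n).le
    have hexp : Real.exp (-(2 * l n)) = Real.exp (-l n) ^ 2 := by
      rw [sq, ← Real.exp_add]; ring_nf
    rw [hexp, mul_pow, mul_pow, mul_pow, hsq]
    ring
  -- tail factor → 0
  have hlexp : Tendsto (fun n => l n * Real.exp (-(l n / 2))) atTop (nhds 0) := by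
    have h1 : Tendsto (fun t : ℝ => t ^ 1 * Real.exp (-t)) atTop (nhds 0) :=
      tendsto_pow_mul_exp_neg_atTop_nhds_zero 1
    have h2 : Tendsto (fun n => l n / 2) atTop atTop :=
      hl.atTop_div_const two_pos
    have h3 := (h1.comp h2).const_mul (2:ℝ)
    rw [mul_zero] at h3
    refine h3.congr fun n => ?_
    simp only [Function.comp, pow_one]
    ring
  -- dominating sequence
  have hdom : Tendsto (fun n => Real.pi * Real.exp 1 * (l n * Real.exp (-(l n / 2))))
      atTop (nhds 0) := by
    have := hlexp.const_mul (Real.pi * Real.exp 1)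
    rwa [mul_zero] at this
  -- eventual comparison of the bound with the dominating sequence
  have hev : ∀ᶠ n in atTop,
      Real.pi * l n * Real.exp (l n * (ε n) ^ 2 / c ^ 2) / (2 * (Real.exp (l n / 2) - 1))
        ≤ Real.pi * Real.exp 1 * (l n * Real.exp (-(l n / 2))) := by
    have hx1 : ∀ᶠ n in atTop, l n * (ε n) ^ 2 / c ^ 2 ≤ 1 :=
      hx0.eventually_le_const one_pos
    have hl2 : ∀ᶠ n in atTop, 2 ≤ l n := hl.eventually_ge_atTop 2
    filter_upwards [hx1, hl2] with n h1 h2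
    set E := Real.exp (l n / 2) with hE
    have hE2 : 2 ≤ E := by
      have : (1:ℝ) ≤ l n / 2 := by linarith
      have h3 := Real.add_one_le_exp 1
      calc (2:ℝ) ≤ Real.exp 1 := by linarith
        _ ≤ E := Real.exp_le_exp.mpr this
    have hEpos : 0 < E := by linarith
    have hnum_le : Real.pi * l n * Real.exp (l n * (ε n) ^ 2 / c ^ 2)
        ≤ Real.pi * l n * Real.exp 1 := by
      have h := Real.exp_le_exp.mpr h1
      have hln := (hl_pos n).le
      exact mul_le_mul_of_nonneg_left h (by positivity)
    have hden_ge : E ≤ 2 * (E - 1) := by linarith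
    have key := div_le_div₀ (by positivity : (0:ℝ) ≤ Real.pi * l n * Real.exp 1)
      hnum_le hEpos hden_ge
    calc Real.pi * l n * Real.exp (l n * (ε n) ^ 2 / c ^ 2) / (2 * (E - 1))
        ≤ Real.pi * l n * Real.exp 1 / E := key
      _ = Real.pi * Real.exp 1 * (l n * Real.exp (-(l n / 2))) := by
          rw [Real.exp_neg, ← hE]
          field_simp
  -- squeeze
  refine squeeze_zero' (Filter.Eventually.of_forall hnonneg) ?_ hdom
  filter_upwards [hev] with n h
  exact (hbound n).trans h
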